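/- Let S be a finite set with |S| = n. In the network D_WO^S, let F(D_WO^S) ⊆ ℝ^A be the convex hull of the characteristic vectors χ^{A(P)} of the arc sets A(P) of all source–sink paths P, and let P_WO^S ⊆ ℝ^{S⋆S} be the convex hull of the characteristic vectors x^R of all strict weak orders R on S. Let π : ℝ^A → ℝ^{S⋆S} be the linear map with π(Φ)_{(i,j)} = Σ { Φ_a : a = (X,Z) ∈ A, i ∈ X and j ∈ Z \ X }. Then π maps F(D_WO^S) onto P_WO^S, i.e., π(F(D_WO^S)) = P_WO^S. -/

import Mathlib

open scoped Classical

/-- Arcs of the network `D_WO^S`: pairs `(X, Z)` of subsets of `S` with `X ⊂ Z`. -/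
def WOArc (S : Type*) [Fintype S] [DecidableEq S] :=
  {a : Finset S × Finset S // a.1 ⊂ a.2}

noncomputable instance (S : Type*) [Fintype S] [DecidableEq S] : Fintype (WOArc S) := by
  unfold WOArc; infer_instance

/-- The characteristic vectors `χ^{A(P)}` of the arc sets of all source–sink paths `P`
in the network `D_WO^S` (from source `∅` to sink `S`). -/
noncomputable def woPathVectors (S : Type*) [Fintype S] [DecidableEq S] :
    Set (WOArc S → ℝ) :=
  {Φ | ∃ (m : ℕ) (X : Fin (m + 1) → Finset S),
    X 0 = ∅ ∧ X (Fin.last m) = Finset.univ ∧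
    (∀ k : Fin m, X k.castSucc ⊂ X k.succ) ∧
    Φ = fun a => if ∃ k : Fin m, (X k.castSucc, X k.succ) = a.val then 1 else 0}

/-- The projection `π : ℝ^A → ℝ^{S⋆S}`, with
`π(Φ)_{(i,j)} = Σ { Φ_a : a = (X,Z) ∈ A, i ∈ X and j ∈ Z \ X }`. -/
noncomputable def woProj (S : Type*) [Fintype S] [DecidableEq S] (Φ : WOArc S → ℝ) :
    {p : S × S // p.1 ≠ p.2} → ℝ :=
  fun p => ∑ a : WOArc S,
    if p.val.1 ∈ a.val.1 ∧ p.val.2 ∈ a.val.2 ∧ p.val.2 ∉ a.val.1 then Φ a else 0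

section AuxWO
open Finset

lemma lowerSet_mem_iff {N : ℕ} (T : Finset (Fin N))
    (hT : ∀ k l : Fin N, k ≤ l → l ∈ T → k ∈ T) (k : Fin N) : k ∈ T ↔ k.val < T.card := by
  constructor
  · intro hk
    have h : Finset.Iic k ⊆ T := fun l hl => hT l k (Finset.mem_Iic.mp hl) hk
    have := Finset.card_le_card h
    rw [Fin.card_Iic] at this
    omega
  · intro hk
    by_contra hmem
    have h : T ⊆ Finset.Iio k := by
      intro l hl
      rw [Finset.mem_Iio]
      by_contra hlk
      exact hmem (hT k l (le_of_not_gt hlk) hl)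
    have := Finset.card_le_card h
    rw [Fin.card_Iio] at this
    omega

noncomputable def woLevel {S : Type*} [Fintype S] [DecidableEq S]
    (m : ℕ) (X : Fin (m + 1) → Finset S) (j : S) : ℕ :=
  (Finset.univ.filter fun k : Fin (m + 1) => j ∉ X k).card

lemma mem_X_iff {S : Type*} [Fintype S] [DecidableEq S]
    {m : ℕ} {X : Fin (m + 1) → Finset S} (hmono : Monotone X) (j : S) (k : Fin (m + 1)) :
    j ∈ X k ↔ woLevel m X j ≤ k.val := by
  have hT : ∀ k l : Fin (m + 1), k ≤ l →
      l ∈ Finset.univ.filter (fun k => j ∉ X k) → k ∈ Finset.univ.filter (fun k => j ∉ X k) := by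
    intro k l hkl hl
    simp only [mem_filter, mem_univ, true_and] at hl ⊢
    exact fun hk => hl (hmono hkl hk)
  have h := lowerSet_mem_iff _ hT k
  simp only [mem_filter, mem_univ, true_and] at h
  unfold woLevel
  constructor
  · intro hj
    by_contra hc
    exact h.mpr (by omega) hj
  · intro hc
    by_contra hj
    have := h.mp hj
    omega

lemma woProj_path {S : Type*} [Fintype S] [DecidableEq S] (m : ℕ) (X : Fin (m + 1) → Finset S)
    (h0 : X 0 = ∅) (hlast : X (Fin.last m) = Finset.univ)
    (hchain : ∀ k : Fin m, X k.castSucc ⊂ X k.succ)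
    (p : {p : S × S // p.1 ≠ p.2}) :
    woProj S (fun a => if ∃ k : Fin m, (X k.castSucc, X k.succ) = a.val then 1 else 0) p
      = if woLevel m X p.val.1 < woLevel m X p.val.2 then 1 else 0 := by
  have hsm : StrictMono X := Fin.strictMono_iff_lt_succ.mpr hchain
  have hmono := hsm.monotone
  set i := p.val.1 with hi
  set j := p.val.2 with hj
  set ci := woLevel m X i with hci
  set cj := woLevel m X j with hcj
  have hcj1 : 1 ≤ cj := by
    apply Finset.card_pos.mpr
    exact ⟨0, by simp [h0]⟩
  have hcjm : cj ≤ m := by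
    have := (mem_X_iff hmono j (Fin.last m)).mp (by rw [hlast]; exact mem_univ _)
    simpa using this
  let f : Fin m → WOArc S := fun k => ⟨(X k.castSucc, X k.succ), hchain k⟩
  have hfinj : Function.Injective f := by
    intro k l h
    have : X k.castSucc = X l.castSucc := congrArg (fun a : WOArc S => a.val.1) h
    exact Fin.castSucc_injective m (hsm.injective this)
  have hsum : woProj S (fun a => if ∃ k : Fin m, (X k.castSucc, X k.succ) = a.val then 1 else 0) p
      = ∑ a : WOArc S, if a ∈ Finset.univ.image f ∧
          (i ∈ a.val.1 ∧ j ∈ a.val.2 ∧ j ∉ a.val.1) then (1 : ℝ) else 0 := by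
    unfold woProj
    apply Finset.sum_congr rfl
    intro a _
    have hmem : (∃ k : Fin m, (X k.castSucc, X k.succ) = a.val) ↔ a ∈ Finset.univ.image f := by
      simp only [Finset.mem_image, mem_univ, true_and]
      constructor
      · rintro ⟨k, hk⟩; exact ⟨k, Subtype.ext hk⟩
      · rintro ⟨k, hk⟩; exact ⟨k, congrArg Subtype.val hk⟩
    beta_reduce
    by_cases hP : i ∈ a.val.1 ∧ j ∈ a.val.2 ∧ j ∉ a.val.1
    · rw [if_pos hP]
      by_cases hQ : ∃ k : Fin m, (X k.castSucc, X k.succ) = a.val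
      · rw [if_pos hQ, if_pos ⟨hmem.mp hQ, hP⟩]
      · rw [if_neg hQ, if_neg (fun h => hQ (hmem.mpr h.1))]
    · rw [if_neg hP, if_neg (fun h => hP h.2)]
  rw [hsum, Finset.sum_boole]
  have hfe : Finset.univ.filter (fun a : WOArc S => a ∈ Finset.univ.image f ∧
      (i ∈ a.val.1 ∧ j ∈ a.val.2 ∧ j ∉ a.val.1))
      = (Finset.univ.image f).filter (fun a => i ∈ a.val.1 ∧ j ∈ a.val.2 ∧ j ∉ a.val.1) := by
    ext a
    simp only [Finset.mem_filter, mem_univ, true_and]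
  rw [hfe, Finset.filter_image, Finset.card_image_of_injective _ hfinj]
  have hcond : ∀ k : Fin m, (i ∈ (f k).val.1 ∧ j ∈ (f k).val.2 ∧ j ∉ (f k).val.1) ↔
      (ci ≤ k.val ∧ cj ≤ k.val + 1 ∧ k.val < cj) := by
    intro k
    have h1 := mem_X_iff hmono i k.castSucc
    have h2 := mem_X_iff hmono j k.succ
    have h3 := mem_X_iff hmono j k.castSucc
    simp only [Fin.coe_castSucc, Fin.val_succ] at h1 h2 h3
    constructor
    · rintro ⟨ha, hb, hc⟩
      refine ⟨h1.mp ha, h2.mp hb, ?_⟩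
      by_contra hk
      exact hc (h3.mpr (by omega))
    · rintro ⟨a, b, c⟩
      refine ⟨h1.mpr a, h2.mpr b, fun hc => ?_⟩
      have := h3.mp hc; omega
  by_cases hlt : ci < cj
  · have : Finset.univ.filter (fun k : Fin m => i ∈ (f k).val.1 ∧ j ∈ (f k).val.2 ∧ j ∉ (f k).val.1)
        = {(⟨cj - 1, by omega⟩ : Fin m)} := by
      ext k
      simp only [Finset.mem_filter, mem_univ, true_and, Finset.mem_singleton, hcond k,
        Fin.ext_iff]
      omega
    rw [this]
    simp [hlt]
  · have : Finset.univ.filter (fun k : Fin m => i ∈ (f k).val.1 ∧ j ∈ (f k).val.2 ∧ j ∉ (f k).val.1)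
        = ∅ := by
      ext k
      simp only [Finset.mem_filter, mem_univ, true_and, Finset.notMem_empty, iff_false, hcond k]
      omega
    rw [this]
    simp [hlt]

/-- `woProj` is linear. -/
lemma woProj_isLinear (S : Type*) [Fintype S] [DecidableEq S] :
    IsLinearMap ℝ (woProj S) := by
  constructor
  · intro Φ Ψ
    funext p
    unfold woProj
    rw [Pi.add_apply, ← Finset.sum_add_distrib]
    apply Finset.sum_congr rfl
    intro a _
    split_ifs <;> simp
  · intro c Φ
    funext p
    unfold woProj
    simp only [Pi.smul_apply, smul_eq_mul, Finset.mul_sum]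
    apply Finset.sum_congr rfl
    intro a _
    split_ifs <;> simp

/-- Image of the path vectors under `woProj` is exactly the weak-order vectors. -/
lemma woProj_image_pathVectors (S : Type*) [Fintype S] [DecidableEq S] :
    woProj S '' woPathVectors S =
      {x : {p : S × S // p.1 ≠ p.2} → ℝ |
        ∃ R : S → S → Prop,
          ((∀ i j, R i j → ¬ R j i) ∧ (∀ i j k, ¬ R i j → ¬ R j k → ¬ R i k)) ∧
          x = fun p => if R p.val.1 p.val.2 then 1 else 0} := by
  ext x
  constructor
  · rintro ⟨Φ, ⟨m, X, h0, hlast, hchain, rfl⟩, rfl⟩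
    refine ⟨fun i j => woLevel m X i < woLevel m X j,
      ⟨fun i j h => by omega, fun i j k h1 h2 => by omega⟩, ?_⟩
    funext p
    by_cases hlt : woLevel m X p.val.1 < woLevel m X p.val.2
    · rw [woProj_path m X h0 hlast hchain p, if_pos hlt, if_pos hlt]
    · rw [woProj_path m X h0 hlast hchain p, if_neg hlt, if_neg hlt]
  · rintro ⟨R, ⟨hasym, hneg⟩, rfl⟩
    classical
    set c : S → ℕ := fun i => (Finset.univ.filter fun j => R j i).card with hc
    have htrans : ∀ a b d, R a b → R b d → R a d := by
      intro a b d hab hbd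
      by_contra h
      exact (hneg a d b h (hasym b d hbd)) hab
    have hclt : ∀ i j, R i j → c i < c j := by
      intro i j hij
      apply Finset.card_lt_card
      rw [Finset.ssubset_iff_of_subset]
      · refine ⟨i, ?_, ?_⟩
        · simp only [Finset.mem_filter, Finset.mem_univ, true_and]; exact hij
        · simp only [Finset.mem_filter, Finset.mem_univ, true_and]
          exact fun h => hasym i i h h
      · intro k hk
        simp only [Finset.mem_filter, Finset.mem_univ, true_and] at hk ⊢
        exact htrans k i j hk hij
    have hcle : ∀ i j, ¬ R i j → c j ≤ c i := by
      intro i j hij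
      apply Finset.card_le_card
      intro k hk
      simp only [Finset.mem_filter, Finset.mem_univ, true_and] at hk ⊢
      by_contra hki
      exact (hneg k i j hki hij) hk
    have hiff : ∀ i j, R i j ↔ c i < c j := by
      intro i j
      refine ⟨hclt i j, fun h => ?_⟩
      by_contra hr
      exact absurd h (not_lt.mpr (hcle i j hr))
    set im : Finset ℕ := Finset.univ.image c with him
    set m := im.card with hm
    set L : S → ℕ := fun i => (im.filter (· < c i)).card with hL
    have hLval : ∀ v : ℕ, v ∈ im → (im.filter (· < v)).card < m := by
      intro v hv
      apply Finset.card_lt_card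
      rw [Finset.ssubset_iff_of_subset (Finset.filter_subset _ _)]
      exact ⟨v, hv, by simp⟩
    have hLlt : ∀ i, L i < m := fun i => hLval (c i) (Finset.mem_image_of_mem c (Finset.mem_univ i))
    have hmonoL : ∀ v w : ℕ, v ∈ im → v < w →
        (im.filter (· < v)).card < (im.filter (· < w)).card := by
      intro v w hv hvw
      apply Finset.card_lt_card
      rw [Finset.ssubset_iff_of_subset (Finset.monotone_filter_right im (fun x hx => by omega))]
      exact ⟨v, Finset.mem_filter.mpr ⟨hv, hvw⟩, by simp⟩
    have hLiff : ∀ i j, c i < c j ↔ L i < L j := by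
      intro i j
      constructor
      · intro h
        exact hmonoL (c i) (c j) (Finset.mem_image_of_mem c (Finset.mem_univ i)) h
      · intro h
        by_contra hcc
        have : L j ≤ L i :=
          Finset.card_le_card (Finset.monotone_filter_right im (fun x hx => by omega))
        omega
    have hsurjL : ∀ t, t < m → ∃ i, L i = t := by
      intro t ht
      let g : {v // v ∈ im} → Fin m := fun v => ⟨(im.filter (· < v.val)).card, hLval v.val v.2⟩
      have hginj : Function.Injective g := by
        intro v w h
        simp only [g, Fin.mk.injEq] at h
        rcases lt_trichotomy (v : ℕ) (w : ℕ) with hlt | heq | hgt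
        · have := hmonoL v w v.2 hlt; omega
        · exact Subtype.ext heq
        · have := hmonoL w v w.2 hgt; omega
      have hgbij : Function.Bijective g :=
        (Fintype.bijective_iff_injective_and_card g).mpr ⟨hginj, by simp [Fintype.card_coe, hm]⟩
      obtain ⟨v, hv⟩ := hgbij.2 ⟨t, ht⟩
      obtain ⟨i, -, hci⟩ := Finset.mem_image.mp v.2
      refine ⟨i, ?_⟩
      have hval : (g v).val = t := by rw [hv]
      simpa [g, hL, hci] using hval
    set X : Fin (m + 1) → Finset S := fun k => Finset.univ.filter fun i => L i < k.val with hX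
    have hX0 : X 0 = ∅ := by ext i; simp [hX]
    have hXlast : X (Fin.last m) = Finset.univ := by
      ext i; simp [hX, Fin.val_last, hLlt i]
    have hchain : ∀ k : Fin m, X k.castSucc ⊂ X k.succ := by
      intro k
      rw [Finset.ssubset_iff_of_subset]
      · obtain ⟨i, hi⟩ := hsurjL k.val k.isLt
        refine ⟨i, ?_, ?_⟩
        · simp only [hX, Finset.mem_filter, Finset.mem_univ, true_and, Fin.val_succ]
          omega
        · simp only [hX, Finset.mem_filter, Finset.mem_univ, true_and, Fin.coe_castSucc]
          omega
      · intro i hi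
        simp only [hX, Finset.mem_filter, Finset.mem_univ, true_and, Fin.coe_castSucc,
          Fin.val_succ] at hi ⊢
        omega
    refine ⟨(fun a => if ∃ k : Fin m, (X k.castSucc, X k.succ) = a.val then 1 else 0),
      ⟨m, X, hX0, hXlast, hchain, rfl⟩, ?_⟩
    funext p
    rw [woProj_path m X hX0 hXlast hchain p]
    have hwl : ∀ r : S, woLevel m X r = L r + 1 := by
      intro r
      unfold woLevel
      have hset : (Finset.univ.filter fun k : Fin (m + 1) => r ∉ X k)
          = Finset.Iic (⟨L r, by have := hLlt r; omega⟩ : Fin (m + 1)) := by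
        ext k
        simp only [Finset.mem_filter, Finset.mem_univ, true_and, Finset.mem_Iic, hX,
          not_and, not_lt, Fin.le_def]
      rw [hset, Fin.card_Iic]
    rw [hwl, hwl]
    by_cases hR : R p.val.1 p.val.2
    · have h2 := (hLiff _ _).mp ((hiff _ _).mp hR)
      rw [if_pos hR, if_pos (show L p.val.1 + 1 < L p.val.2 + 1 by omega)]
    · have h2 : ¬ (L p.val.1 + 1 < L p.val.2 + 1) := fun hlt =>
        hR ((hiff _ _).mpr ((hLiff _ _).mpr (by omega)))
      rw [if_neg hR, if_neg h2]

end AuxWO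

/-- The projection `π` maps the flow polytope `F(D_WO^S)` (the convex hull of the
characteristic vectors of arc sets of source–sink paths) onto the weak order polytope
`P_WO^S` (the convex hull of the characteristic vectors of all strict weak orders). -/
theorem woProj_image_flowPolytope (S : Type*) [Fintype S] [DecidableEq S] :
    woProj S '' convexHull ℝ (woPathVectors S) =
      convexHull ℝ
        {x : {p : S × S // p.1 ≠ p.2} → ℝ |
          ∃ R : S → S → Prop,
            ((∀ i j, R i j → ¬ R j i) ∧ (∀ i j k, ¬ R i j → ¬ R j k → ¬ R i k)) ∧
            x = fun p => if R p.val.1 p.val.2 then 1 else 0} := by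
  rw [(woProj_isLinear S).image_convexHull, woProj_image_pathVectors]
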